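/- Let G be a linearly ordered group and let a, b, d be elements of G. For (x,y) ∈ G × G, the equation (a,b) = (x,y)·(d,b) holds in 𝓑(G) if and only if (a,d) ≼ (x,y) in the natural partial order of 𝓑(G). -/

import Mathlib

/-- The multiplication of the bicyclic extension `𝓑(G) = G × G` of a linearly ordered
group `G`: `(a,b)·(c,d) = (c·b⁻¹·a, d)` if `b < c`; `(a,d)` if `b = c`;
`(a, b·c⁻¹·d)` if `b > c`. -/
def bmul {G : Type*} [Group G] [LinearOrder G] (s t : G × G) : G × G :=
  if s.2 < t.1 then (t.1 * s.2⁻¹ * s.1, t.2)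
  else if s.2 = t.1 then (s.1, t.2)
  else (s.1, s.2 * t.1⁻¹ * t.2)

/-- The natural partial order on `𝓑(G)`: `s ≼ t` iff `s = e·t` for some idempotent
`e` of `𝓑(G)`; the idempotents of `𝓑(G)` are exactly the pairs `(x,x)`. -/
def ble {G : Type*} [Group G] [LinearOrder G] (s t : G × G) : Prop :=
  ∃ x : G, bmul (x, x) t = s

/-- Proposition 2.2(ii): `(a,b) = (x,y)·(d,b)` in `𝓑(G)` iff `(a,d) ≼ (x,y)`. -/
theorem eq_right_factor_iff {G : Type*} [Group G] [LinearOrder G]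
    [CovariantClass G G (· * ·) (· ≤ ·)]
    [CovariantClass G G (Function.swap (· * ·)) (· ≤ ·)]
    (a b d : G) (x y : G) :
    (a, b) = bmul (x, y) (d, b) ↔ ble (a, d) (x, y) := by
  constructor
  · intro h
    refine ⟨a, ?_⟩
    unfold bmul at h ⊢
    simp only at h ⊢
    rcases lt_trichotomy y d with hyd | hyd | hyd
    · rw [if_pos hyd] at h
      obtain ⟨ha, -⟩ := Prod.mk.injEq .. ▸ h
      have hxa : x < a := by
        rw [ha]
        calc x = 1 * x := (one_mul x).symm
        _ < d * y⁻¹ * x := by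
          have : (1:G) < d * y⁻¹ := by simpa using mul_lt_mul_left hyd y⁻¹
          exact mul_lt_mul_left this x
      rw [if_neg (not_lt.mpr hxa.le), if_neg hxa.ne']
      refine Prod.ext rfl ?_
      simp only [ha]
      group
    · rw [if_neg (not_lt.mpr hyd.ge), if_pos hyd] at h
      obtain ⟨ha, -⟩ := Prod.mk.injEq .. ▸ h
      rw [ha, if_neg (lt_irrefl x), if_pos rfl, hyd]
    · rw [if_neg (not_lt.mpr hyd.le), if_neg hyd.ne'] at h
      obtain ⟨-, hb⟩ := Prod.mk.injEq .. ▸ h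
      exfalso
      have : y * d⁻¹ = 1 := by
        have := mul_right_cancel (hb.symm.trans (one_mul b).symm)
        exact this
      exact hyd.ne' (mul_inv_eq_one.mp this)
  · rintro ⟨z, hz⟩
    unfold bmul at hz ⊢
    simp only at hz ⊢
    rcases lt_trichotomy z x with hzx | hzx | hzx
    · rw [if_pos hzx] at hz
      obtain ⟨hx, hy⟩ := Prod.mk.injEq .. ▸ hz
      have hx' : x = a := by rw [← hx]; group
      rw [← hy, if_neg (lt_irrefl y), if_pos rfl, hx']
    · rw [if_neg (hzx ▸ lt_irrefl z), if_pos hzx] at hz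
      obtain ⟨hx, hy⟩ := Prod.mk.injEq .. ▸ hz
      rw [← hy, if_neg (lt_irrefl y), if_pos rfl, show x = a from hzx ▸ hx]
    · rw [if_neg (not_lt.mpr hzx.le), if_neg hzx.ne'] at hz
      obtain ⟨hx, hy⟩ := Prod.mk.injEq .. ▸ hz
      subst hx
      have hyd : y < d := by
        rw [← hy]
        calc y = 1 * y := (one_mul y).symm
        _ < z * x⁻¹ * y := by
          have : (1:G) < z * x⁻¹ := by simpa using mul_lt_mul_left hzx x⁻¹
          exact mul_lt_mul_left this y
      rw [if_pos hyd]
      refine Prod.ext ?_ rfl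
      simp only [← hy]
      group
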